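/- Let H ∈ (1/2, 1), T > 0, and let f : [0,T] → ℝ be measurable with ∫₀ᵀ |f(u)|^{1/H} du < ∞. Then ∫₀ᵀ ∫₀ᵀ |f(u)| |f(v)| |u − v|^{2H−2} du dv < ∞. -/

import Mathlib

open MeasureTheory Set
open scoped ENNReal


/-- Young-type inequality in `ℝ≥0∞`: `X^θ * Y ≤ X + Y^(1/(1-θ))` for `0 < θ < 1`. -/
lemma young_aux {θ : ℝ} (hθ0 : 0 < θ) (hθ1 : θ < 1) (X Y : ℝ≥0∞) :
    X ^ θ * Y ≤ X + Y ^ (1/(1-θ)) := by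
  have h1θ : 0 < 1 - θ := by linarith
  have hq : 0 < 1/(1-θ) := by positivity
  rcases eq_or_ne Y 0 with rfl | hY0
  · simp
  rcases eq_or_ne Y ⊤ with rfl | hYt
  · have htop : (⊤:ℝ≥0∞) ^ ((1-θ)⁻¹) = ⊤ := ENNReal.top_rpow_of_pos (by positivity)
    simp [htop]
  rcases eq_or_ne X 0 with rfl | hX0
  · simp [ENNReal.zero_rpow_of_pos hθ0]
  rcases eq_or_ne X ⊤ with rfl | hXt
  · simp [ENNReal.top_rpow_of_pos hθ0, hY0]
  rcases le_total X (Y ^ (1/(1-θ))) with h | h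
  · refine le_trans ?_ (self_le_add_left _ _)
    calc X ^ θ * Y ≤ (Y ^ (1/(1-θ))) ^ θ * Y ^ (1:ℝ) := by
          rw [ENNReal.rpow_one]
          exact mul_le_mul_left (ENNReal.rpow_le_rpow h hθ0.le) Y
      _ = Y ^ (1/(1-θ) * θ + 1) := by
          rw [← ENNReal.rpow_mul, ← ENNReal.rpow_add _ _ hY0 hYt]
      _ = Y ^ (1/(1-θ)) := by
          congr 1
          field_simp
          ring
  · refine le_trans ?_ (self_le_add_right _ _)
    have hY : Y ≤ X ^ (1 - θ) := by
      have h2 := ENNReal.rpow_le_rpow h h1θ.le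
      rwa [← ENNReal.rpow_mul, one_div, inv_mul_cancel₀ h1θ.ne', ENNReal.rpow_one] at h2
    calc X ^ θ * Y ≤ X ^ θ * X ^ (1-θ) := mul_le_mul_right hY _
      _ = X ^ (θ + (1-θ)) := (ENNReal.rpow_add _ _ hX0 hXt).symm
      _ = X := by norm_num

/-- Geometric bound: `∑_k r^{|j-k|} ≤ 2 (1-r)⁻¹`. -/
lemma geom_aux {r : ℝ≥0∞} (hr : r ≤ 1) (j : ℕ) :
    (∑' k : ℕ, r ^ ((j - k) + (k - j))) ≤ 2 * (1 - r)⁻¹ := by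
  have hG : ∀ k : ℕ, r ^ ((j - k) + (k - j))
      ≤ (if k ≤ j then r ^ (j - k) else 0) + (if j < k then r ^ (k - j) else 0) := by
    intro k
    rcases le_or_gt k j with h | h
    · have : k - j = 0 := Nat.sub_eq_zero_of_le h
      simp [this, h, not_lt.2 h]
    · have : j - k = 0 := Nat.sub_eq_zero_of_le h.le
      simp [this, h, not_le.2 h]
  refine le_trans (ENNReal.tsum_le_tsum hG) ?_
  rw [ENNReal.tsum_add, two_mul]
  gcongr
  · -- finite part
    have h0 : ∀ k ∉ Finset.range (j+1), (if k ≤ j then r ^ (j - k) else 0) = 0 := by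
      intro k hk
      have : ¬ k ≤ j := by simpa [Nat.lt_succ_iff] using hk
      simp [this]
    rw [tsum_eq_sum h0]
    have : ∑ k ∈ Finset.range (j+1), (if k ≤ j then r ^ (j - k) else 0)
        = ∑ k ∈ Finset.range (j+1), r ^ (j - k) := by
      refine Finset.sum_congr rfl fun k hk => ?_
      have : k ≤ j := by simpa [Nat.lt_succ_iff] using hk
      simp [this]
    rw [this]
    have hrefl := Finset.sum_range_reflect (fun m => r ^ m) (j+1)
    have : ∑ k ∈ Finset.range (j+1), r ^ (j - k) = ∑ k ∈ Finset.range (j+1), r ^ k := by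
      rw [← hrefl]
      refine Finset.sum_congr rfl fun k hk => ?_
      congr 1
    rw [this, ← ENNReal.tsum_geometric r]
    exact ENNReal.sum_le_tsum _
  · -- tail part
    have hsupp : Function.support (fun k => (if j < k then r ^ (k - j) else 0))
        ⊆ Set.range (fun m : ℕ => m + (j+1)) := by
      intro k hk
      by_cases h : j < k
      · exact ⟨k - (j+1), show k - (j+1) + (j+1) = k by omega⟩
      · simp [h] at hk
    have hinj : Function.Injective (fun m : ℕ => m + (j+1)) := add_left_injective (j+1)
    rw [← hinj.tsum_eq hsupp]
    have : ∀ m : ℕ, (if j < m + (j+1) then r ^ (m + (j+1) - j) else 0) = r ^ (m+1) := by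
      intro m
      have h1 : j < m + (j+1) := by omega
      have h2 : m + (j+1) - j = m + 1 := by omega
      simp [h1, h2]
    calc (∑' m : ℕ, if j < m + (j+1) then r ^ (m + (j+1) - j) else 0)
        = ∑' m : ℕ, r ^ (m+1) := by exact tsum_congr this
      _ ≤ ∑' m : ℕ, r ^ m := by
          refine ENNReal.tsum_le_tsum fun m => ?_
          calc r ^ (m+1) = r ^ m * r := by ring
            _ ≤ r ^ m * 1 := mul_le_mul_right hr _
            _ = r ^ m := mul_one _
      _ = (1 - r)⁻¹ := ENNReal.tsum_geometric r


/-- `∫_0^a w^β dw = a^{β+1}/(β+1)` as a lintegral. -/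
lemma lint_rpow_Ioc {β : ℝ} (hβ1 : -1 < β) (hβ0 : β < 0) {a : ℝ} (ha : 0 ≤ a) :
    ∫⁻ w in Ioc (0:ℝ) a, ENNReal.ofReal (w ^ β)
      = ENNReal.ofReal (a ^ (β+1) / (β+1)) := by
  have hint : IntegrableOn (fun w : ℝ => w ^ β) (Ioc 0 a) := by
    have h := intervalIntegral.intervalIntegrable_rpow' (a := 0) (b := a) hβ1
    rwa [intervalIntegrable_iff, uIoc_of_le ha] at h
  rw [← ofReal_integral_eq_lintegral_ofReal hint
    ((ae_restrict_iff' measurableSet_Ioc).2 (ae_of_all _ fun w hw => Real.rpow_nonneg hw.1.le β))]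
  congr 1
  rw [← intervalIntegral.integral_of_le ha, integral_rpow (Or.inl hβ1),
    Real.zero_rpow (by linarith : β + 1 ≠ 0)]
  ring

/-- near-field bound for the kernel -/
lemma lint_ker_Icc {β : ℝ} (hβ1 : -1 < β) (hβ0 : β < 0) (u : ℝ) {a : ℝ} (ha : 0 ≤ a) :
    ∫⁻ v in Icc (u - a) (u + a), ENNReal.ofReal (|u - v| ^ β)
      ≤ 2 * ENNReal.ofReal (a ^ (β+1) / (β+1)) := by
  have hsub : Icc (u - a) (u + a) ⊆ Ico (u - a) u ∪ Icc u (u + a) := by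
    intro v hv
    rcases lt_or_ge v u with h | h
    · exact Or.inl ⟨hv.1, h⟩
    · exact Or.inr ⟨h, hv.2⟩
  refine le_trans (lintegral_mono_set hsub) ?_
  refine le_trans (lintegral_union_le _ _ _) ?_
  have hleft : ∫⁻ v in Ico (u - a) u, ENNReal.ofReal (|u - v| ^ β)
      = ∫⁻ w in Ioc (0:ℝ) a, ENNReal.ofReal (w ^ β) := by
    have hcongr : ∫⁻ v in Ico (u - a) u, ENNReal.ofReal (|u - v| ^ β)
        = ∫⁻ v in Ico (u - a) u, ENNReal.ofReal ((u - v) ^ β) := by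
      refine setLIntegral_congr_fun_ae measurableSet_Ico (ae_of_all _ fun v hv => ?_)
      rw [abs_of_nonneg (by linarith [hv.2] : (0:ℝ) ≤ u - v)]
    rw [hcongr]
    have hmp : MeasurePreserving (fun t : ℝ => u - t) volume volume :=
      Measure.measurePreserving_sub_left volume u
    have hemb : MeasurableEmbedding (fun t : ℝ => u - t) :=
      (MeasurableEquiv.subLeft u).measurableEmbedding
    have himg := hmp.setLIntegral_comp_emb hemb
      (fun v => ENNReal.ofReal ((u - v) ^ β)) (Ioc 0 a)
    have himage : (fun t : ℝ => u - t) '' Ioc 0 a = Ico (u - a) u := by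
      rw [Set.image_const_sub_Ioc, sub_zero]
    rw [himage] at himg
    rw [← himg]
    refine setLIntegral_congr_fun_ae measurableSet_Ioc (ae_of_all _ fun w hw => ?_)
    congr 2
    ring
  have hright : ∫⁻ v in Icc u (u + a), ENNReal.ofReal (|u - v| ^ β)
      = ∫⁻ w in Icc (0:ℝ) a, ENNReal.ofReal (w ^ β) := by
    have hcongr : ∫⁻ v in Icc u (u + a), ENNReal.ofReal (|u - v| ^ β)
        = ∫⁻ v in Icc u (u + a), ENNReal.ofReal ((v - u) ^ β) := by
      refine setLIntegral_congr_fun_ae measurableSet_Icc (ae_of_all _ fun v hv => ?_)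
      rw [abs_sub_comm, abs_of_nonneg (by linarith [hv.1] : (0:ℝ) ≤ v - u)]
    rw [hcongr]
    have hmp : MeasurePreserving (fun t : ℝ => t + u) volume volume :=
      measurePreserving_add_right volume u
    have hemb : MeasurableEmbedding (fun t : ℝ => t + u) :=
      (MeasurableEquiv.addRight u).measurableEmbedding
    have himg := hmp.setLIntegral_comp_emb hemb
      (fun v => ENNReal.ofReal ((v - u) ^ β)) (Icc 0 a)
    have himage : (fun t : ℝ => t + u) '' Icc 0 a = Icc u (u + a) := by
      rw [Set.image_add_const_Icc, zero_add, add_comm a u]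
    rw [himage] at himg
    rw [← himg]
    refine setLIntegral_congr_fun_ae measurableSet_Icc (ae_of_all _ fun w hw => ?_)
    congr 2
    ring
  have hIcc : ∫⁻ w in Icc (0:ℝ) a, ENNReal.ofReal (w ^ β)
      = ∫⁻ w in Ioc (0:ℝ) a, ENNReal.ofReal (w ^ β) := by
    rw [Measure.restrict_congr_set Ioc_ae_eq_Icc]
  rw [hleft, hright, hIcc, lint_rpow_Ioc hβ1 hβ0 ha, two_mul]

/-- Main kernel bound: `∫_A |u-v|^β dv ≤ C · |A|^{β+1}`. -/
lemma kernel_bound {β : ℝ} (hβ1 : -1 < β) (hβ0 : β < 0) (u : ℝ) {A : Set ℝ}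
    (hA : MeasurableSet A) (hAfin : volume A ≠ ⊤) :
    ∫⁻ v in A, ENNReal.ofReal (|u - v| ^ β)
      ≤ ENNReal.ofReal (2 / (β+1) + 1) * (volume A) ^ (β+1) := by
  set a : ℝ := (volume A).toReal with ha_def
  have ha0 : 0 ≤ a := ENNReal.toReal_nonneg
  have hvol : volume A = ENNReal.ofReal a := (ENNReal.ofReal_toReal hAfin).symm
  rcases eq_or_lt_of_le ha0 with h0 | hapos
  · have : volume A = 0 := by rw [hvol, ← h0]; simp
    rw [setLIntegral_measure_zero _ _ this]
    exact zero_le ..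
  · set B := Icc (u - a) (u + a) with hB
    have hsplit : ∫⁻ v in A, ENNReal.ofReal (|u - v| ^ β)
        ≤ (∫⁻ v in A ∩ B, ENNReal.ofReal (|u - v| ^ β))
          + ∫⁻ v in A \ B, ENNReal.ofReal (|u - v| ^ β) := by
      refine le_trans (le_of_eq ?_) (lintegral_union_le _ _ _)
      rw [Set.inter_union_diff]
    have hnear : (∫⁻ v in A ∩ B, ENNReal.ofReal (|u - v| ^ β))
        ≤ 2 * ENNReal.ofReal (a ^ (β+1) / (β+1)) :=
      le_trans (lintegral_mono_set Set.inter_subset_right) (lint_ker_Icc hβ1 hβ0 u ha0)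
    have hfar : (∫⁻ v in A \ B, ENNReal.ofReal (|u - v| ^ β))
        ≤ ENNReal.ofReal (a ^ β) * volume A := by
      have hptwise : ∀ v ∈ A \ B, ENNReal.ofReal (|u - v| ^ β) ≤ ENNReal.ofReal (a ^ β) := by
        intro v hv
        have hdist : a < |u - v| := by
          by_contra hcon
          push_neg at hcon
          obtain ⟨h1, h2⟩ := abs_le.1 hcon
          exact hv.2 ⟨by linarith, by linarith⟩
        exact ENNReal.ofReal_le_ofReal (Real.rpow_le_rpow_of_nonpos hapos hdist.le hβ0.le)
      calc ∫⁻ v in A \ B, ENNReal.ofReal (|u - v| ^ β)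
          ≤ ∫⁻ _ in A \ B, ENNReal.ofReal (a ^ β) :=
            setLIntegral_mono measurable_const hptwise
        _ = ENNReal.ofReal (a ^ β) * volume (A \ B) := setLIntegral_const _ _
        _ ≤ ENNReal.ofReal (a ^ β) * volume A :=
            mul_le_mul_right (measure_mono Set.diff_subset) _
    have hθpos : 0 < β + 1 := by linarith
    have hfar2 : ENNReal.ofReal (a ^ β) * volume A = ENNReal.ofReal (a ^ (β+1)) := by
      rw [hvol, ← ENNReal.ofReal_mul (Real.rpow_nonneg ha0 β),
        ← Real.rpow_add_one (ne_of_gt hapos)]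
    calc ∫⁻ v in A, ENNReal.ofReal (|u - v| ^ β)
        ≤ 2 * ENNReal.ofReal (a ^ (β+1) / (β+1)) + ENNReal.ofReal (a ^ (β+1)) := by
          refine le_trans hsplit (add_le_add hnear (le_trans hfar (le_of_eq hfar2)))
      _ = ENNReal.ofReal (2 / (β+1) + 1) * ENNReal.ofReal (a ^ (β+1)) := by
          rw [← ENNReal.ofReal_ofNat 2, ← ENNReal.ofReal_mul (by norm_num),
            ← ENNReal.ofReal_add (by positivity) (Real.rpow_nonneg ha0 _),
            ← ENNReal.ofReal_mul (by positivity)]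
          congr 1
          field_simp
      _ = ENNReal.ofReal (2 / (β+1) + 1) * (volume A) ^ (β+1) := by
          rw [hvol, ENNReal.ofReal_rpow_of_pos hapos]


lemma core_arith {H : ℝ} (hH1 : 1/2 < H) (hH2 : H < 1) (x y : ℝ≥0∞) (j k : ℕ) :
    (2:ℝ≥0∞) ^ (j:ℝ) * 2 ^ (k:ℝ) * (x ^ (2*H-1) * y)
      ≤ 2 ^ (-(1/H - 1) * ((k:ℝ) - (j:ℝ)))
        * (2 ^ ((j:ℝ)/H) * x + (2 ^ ((k:ℝ)/H) * y) ^ (1/(2-2*H))) := by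
  have hH0 : 0 < H := by linarith
  have hθ0 : 0 < 2*H-1 := by linarith
  have hθ1 : 2*H-1 < 1 := by linarith
  have h2 : (2:ℝ≥0∞) ≠ 0 := by norm_num
  have h2' : (2:ℝ≥0∞) ≠ ⊤ := by norm_num
  have hpow : ∀ s t : ℝ, (2:ℝ≥0∞) ^ s * 2 ^ t = 2 ^ (s+t) := fun s t =>
    (ENNReal.rpow_add s t h2 h2').symm
  have hY := young_aux hθ0 hθ1 ((2:ℝ≥0∞) ^ ((j:ℝ)/H) * x) ((2:ℝ≥0∞) ^ ((k:ℝ)/H) * y)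
  have hq : 1 - (2*H-1) = 2-2*H := by ring
  rw [hq] at hY
  have lhs_eq : (2:ℝ≥0∞) ^ (j:ℝ) * 2 ^ (k:ℝ) * (x ^ (2*H-1) * y)
      = 2 ^ ((j:ℝ)+(k:ℝ)) * (x ^ (2*H-1) * y) := by rw [hpow]
  have rhs_eq : (2:ℝ≥0∞) ^ (-(1/H - 1) * ((k:ℝ) - (j:ℝ)))
        * ((2 ^ ((j:ℝ)/H) * x) ^ (2*H-1) * (2 ^ ((k:ℝ)/H) * y))
      = 2 ^ ((j:ℝ)+(k:ℝ)) * (x ^ (2*H-1) * y) := by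
    rw [ENNReal.mul_rpow_of_nonneg _ _ hθ0.le, ← ENNReal.rpow_mul]
    rw [show (2:ℝ≥0∞) ^ (-(1/H - 1) * ((k:ℝ) - (j:ℝ)))
          * ((2:ℝ≥0∞) ^ ((j:ℝ)/H * (2*H-1)) * x ^ (2*H-1) * ((2:ℝ≥0∞) ^ ((k:ℝ)/H) * y))
        = (2:ℝ≥0∞) ^ (-(1/H - 1) * ((k:ℝ) - (j:ℝ))) * 2 ^ ((j:ℝ)/H * (2*H-1)) * 2 ^ ((k:ℝ)/H)
          * (x ^ (2*H-1) * y) from by ring]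
    rw [hpow, hpow]
    congr 2
    field_simp
    ring
  calc (2:ℝ≥0∞) ^ (j:ℝ) * 2 ^ (k:ℝ) * (x ^ (2*H-1) * y)
      = 2 ^ (-(1/H - 1) * ((k:ℝ) - (j:ℝ)))
        * ((2 ^ ((j:ℝ)/H) * x) ^ (2*H-1) * (2 ^ ((k:ℝ)/H) * y)) := by rw [lhs_eq, rhs_eq]
    _ ≤ _ := mul_le_mul_right hY _

lemma term_bound {H : ℝ} (hH1 : 1/2 < H) (hH2 : H < 1) {j k : ℕ} (hjk : j ≤ k)
    (x y : ℝ≥0∞) :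
    (2:ℝ≥0∞) ^ (j:ℝ) * 2 ^ (k:ℝ) * (x ^ (2*H-1) * y)
      ≤ ((2:ℝ≥0∞) ^ (-(1/H-1) : ℝ)) ^ ((j-k)+(k-j))
        * ((2 ^ ((j:ℝ)/H) * x + (2 ^ ((j:ℝ)/H) * x) ^ (1/(2-2*H)))
         + (2 ^ ((k:ℝ)/H) * y + (2 ^ ((k:ℝ)/H) * y) ^ (1/(2-2*H)))) := by
  have hw : ((2:ℝ≥0∞) ^ (-(1/H-1) : ℝ)) ^ ((j-k)+(k-j))
      = (2:ℝ≥0∞) ^ (-(1/H - 1) * ((k:ℝ) - (j:ℝ))) := by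
    have hnat : (j-k)+(k-j) = k - j := by omega
    rw [hnat, ← ENNReal.rpow_natCast ((2:ℝ≥0∞) ^ (-(1/H-1) : ℝ)) (k-j), ← ENNReal.rpow_mul]
    congr 1
    rw [Nat.cast_sub hjk]
  rw [hw]
  refine le_trans (core_arith hH1 hH2 x y j k) (mul_le_mul_right ?_ _)
  refine add_le_add ?_ ?_
  · exact self_le_add_right _ _
  · exact self_le_add_left _ _

lemma sum_bound {r : ℝ≥0∞} (hr : r ≤ 1) (c : ℕ → ℝ≥0∞) :
    (∑' j : ℕ, ∑' k : ℕ, r ^ ((j-k)+(k-j)) * (c j + c k))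
      ≤ 2 * ((2 * (1-r)⁻¹) * ∑' i, c i) := by
  have hgeom' : ∀ k : ℕ, (∑' j : ℕ, r ^ ((j-k)+(k-j))) ≤ 2 * (1-r)⁻¹ := by
    intro k
    have : (∑' j : ℕ, r ^ ((j-k)+(k-j))) = ∑' j : ℕ, r ^ ((k-j)+(j-k)) :=
      tsum_congr fun j => by rw [add_comm]
    rw [this]
    exact geom_aux hr k
  calc (∑' j : ℕ, ∑' k : ℕ, r ^ ((j-k)+(k-j)) * (c j + c k))
      = (∑' j : ℕ, ∑' k : ℕ, r ^ ((j-k)+(k-j)) * c j)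
        + (∑' j : ℕ, ∑' k : ℕ, r ^ ((j-k)+(k-j)) * c k) := by
        rw [← ENNReal.tsum_add]
        refine tsum_congr fun j => ?_
        rw [← ENNReal.tsum_add]
        exact tsum_congr fun k => by rw [mul_add]
    _ ≤ (2 * (1-r)⁻¹) * (∑' i, c i) + (2 * (1-r)⁻¹) * (∑' i, c i) := by
        refine add_le_add ?_ ?_
        · calc (∑' j : ℕ, ∑' k : ℕ, r ^ ((j-k)+(k-j)) * c j)
              = ∑' j : ℕ, (∑' k : ℕ, r ^ ((j-k)+(k-j))) * c j := by
                refine tsum_congr fun j => ?_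
                rw [ENNReal.tsum_mul_right]
            _ ≤ ∑' j : ℕ, (2 * (1-r)⁻¹) * c j :=
                ENNReal.tsum_le_tsum fun j => mul_le_mul_left (geom_aux hr j) _
            _ = (2 * (1-r)⁻¹) * (∑' i, c i) := ENNReal.tsum_mul_left
        · calc (∑' j : ℕ, ∑' k : ℕ, r ^ ((j-k)+(k-j)) * c k)
              = ∑' k : ℕ, ∑' j : ℕ, r ^ ((j-k)+(k-j)) * c k := ENNReal.tsum_comm
            _ = ∑' k : ℕ, (∑' j : ℕ, r ^ ((j-k)+(k-j))) * c k := by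
                refine tsum_congr fun k => ?_
                rw [ENNReal.tsum_mul_right]
            _ ≤ ∑' k : ℕ, (2 * (1-r)⁻¹) * c k :=
                ENNReal.tsum_le_tsum fun k => mul_le_mul_left (hgeom' k) _
            _ = (2 * (1-r)⁻¹) * (∑' i, c i) := ENNReal.tsum_mul_left
    _ = 2 * ((2 * (1-r)⁻¹) * ∑' i, c i) := (two_mul _).symm


set_option maxHeartbeats 1000000 in
/-- The inclusion `L^{1/H}([0,T]) ⊂ |ℋ|` (equation (2) of the paper): for `H > 1/2`, if
`∫₀ᵀ |f(u)|^{1/H} du < ∞` then `∫₀ᵀ ∫₀ᵀ |f(u)||f(v)||u-v|^{2H-2} du dv < ∞`. -/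
theorem L_one_over_H_subset_absH
    (H T : ℝ) (hH : H ∈ Set.Ioo (1/2 : ℝ) 1) (hT : 0 < T)
    (f : ℝ → ℝ) (hf : Measurable f)
    (hint : (∫⁻ u in Set.Ioc (0 : ℝ) T, ENNReal.ofReal (|f u| ^ (1/H))) < ⊤) :
    (∫⁻ u in Set.Ioc (0 : ℝ) T, ∫⁻ v in Set.Ioc (0 : ℝ) T,
      ENNReal.ofReal (|f u| * |f v| * |u - v| ^ (2*H - 2))) < ⊤ := by
  obtain ⟨hH1, hH2⟩ := hH
  have hH0 : 0 < H := by linarith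
  have hβ1 : (-1:ℝ) < 2*H - 2 := by linarith
  have hβ0 : (2*H - 2 : ℝ) < 0 := by linarith
  have hβθ : (2*H - 2 : ℝ) + 1 = 2*H - 1 := by ring
  -- the kernel
  set K : ℝ → ℝ → ℝ≥0∞ := fun u v => ENNReal.ofReal (|u - v| ^ (2*H-2)) with hK_def
  have hKm : Measurable (Function.uncurry K) := by
    simp only [hK_def]
    exact ((measurable_fst.sub measurable_snd).abs.pow_const _).ennreal_ofReal
  have hKv : ∀ u, Measurable fun v => K u v := by
    intro u
    simp only [hK_def]
    exact ((measurable_const.sub measurable_id).abs.pow_const _).ennreal_ofReal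
  -- dyadic level sets
  set D : ℕ → Set ℝ := fun k =>
    Ioc 0 T ∩ (fun u => 1 + |f u|) ⁻¹' Ico ((2:ℝ)^k) (2^(k+1)) with hD_def
  have hfm : Measurable fun u : ℝ => 1 + |f u| := measurable_const.add hf.abs
  have hD : ∀ k, MeasurableSet (D k) := fun k => measurableSet_Ioc.inter (hfm measurableSet_Ico)
  have hDsub : ∀ k, D k ⊆ Ioc 0 T := fun k => inter_subset_left
  have hDmem : ∀ k u, u ∈ D k → (2:ℝ)^k ≤ 1 + |f u| ∧ 1 + |f u| < 2^(k+1) := fun k u hu => hu.2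
  have hDdisj : Pairwise (Function.onFun Disjoint D) := by
    intro k l hkl
    rw [Function.onFun, Set.disjoint_left]
    intro u hk hl
    obtain ⟨hk1, hk2⟩ := hDmem k u hk
    obtain ⟨hl1, hl2⟩ := hDmem l u hl
    rcases hkl.lt_or_gt with h | h
    · have h2 : (2:ℝ)^l < 2^(k+1) := lt_of_le_of_lt hl1 hk2
      have := (pow_lt_pow_iff_right₀ (by norm_num : (1:ℝ) < 2)).1 h2
      omega
    · have h2 : (2:ℝ)^k < 2^(l+1) := lt_of_le_of_lt hk1 hl2
      have := (pow_lt_pow_iff_right₀ (by norm_num : (1:ℝ) < 2)).1 h2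
      omega
  -- indicator majorant
  set φ : ℕ → ℝ → ℝ≥0∞ := fun k => (D k).indicator (fun _ => (2:ℝ≥0∞) ^ (k+1)) with hφ_def
  have hφm : ∀ k, Measurable (φ k) := fun k => measurable_const.indicator (hD k)
  set Φ : ℝ → ℝ≥0∞ := fun u => ∑' k, φ k u with hΦ_def
  have hΦm : Measurable Φ := Measurable.ennreal_tsum hφm
  have hG : ∀ u ∈ Ioc (0:ℝ) T, ENNReal.ofReal |f u| ≤ Φ u := by
    intro u hu
    have hx1 : (1:ℝ) ≤ 1 + |f u| := le_add_of_nonneg_right (abs_nonneg _)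
    have hex : ∃ n : ℕ, 1 + |f u| < 2 ^ (n+1) := by
      obtain ⟨n, hn⟩ := pow_unbounded_of_one_lt (1 + |f u|) (by norm_num : (1:ℝ) < 2)
      exact ⟨n, hn.trans_le (pow_le_pow_right₀ (by norm_num) (Nat.le_succ n))⟩
    set k := Nat.find hex with hk_def
    have hupper : 1 + |f u| < 2 ^ (k+1) := Nat.find_spec hex
    have hlower : (2:ℝ)^k ≤ 1 + |f u| := by
      rcases Nat.eq_zero_or_pos k with h0 | hpos
      · rw [h0, pow_zero]; exact hx1
      · have hmin := Nat.find_min hex (Nat.sub_lt hpos one_pos)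
        push_neg at hmin
        have hk1 : k - 1 + 1 = k := Nat.succ_pred_eq_of_pos hpos
        rwa [hk1] at hmin
    have hmem : u ∈ D k := by
      refine ⟨hu, ?_⟩
      simp only [Set.mem_preimage, Set.mem_Ico]
      exact ⟨hlower, hupper⟩
    calc ENNReal.ofReal |f u| ≤ ENNReal.ofReal ((2:ℝ)^(k+1)) :=
          ENNReal.ofReal_le_ofReal (by linarith [abs_nonneg (f u)])
      _ = (2:ℝ≥0∞) ^ (k+1) := by
          rw [ENNReal.ofReal_pow (by norm_num : (0:ℝ) ≤ 2)]
          norm_num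
      _ = φ k u := by
          simp only [hφ_def]
          exact (Set.indicator_of_mem hmem fun _ => (2:ℝ≥0∞)^(k+1)).symm
      _ ≤ Φ u := ENNReal.le_tsum k
  -- measures of the level sets
  set a : ℕ → ℝ≥0∞ := fun k => volume (D k) with ha_def
  have haT : ∀ k, a k ≤ ENNReal.ofReal T := by
    intro k
    calc a k ≤ volume (Ioc (0:ℝ) T) := measure_mono (hDsub k)
      _ = ENNReal.ofReal T := by rw [Real.volume_Ioc, sub_zero]
  have hafin : ∀ k, a k ≠ ⊤ := fun k => ((haT k).trans_lt ENNReal.ofReal_lt_top).ne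
  set P : ℝ≥0∞ := ∫⁻ u in Ioc (0:ℝ) T, ENNReal.ofReal (|f u| ^ (1/H)) with hP_def
  have hPfin : P ≠ ⊤ := hint.ne
  set b : ℕ → ℝ≥0∞ := fun k => (2:ℝ≥0∞) ^ ((k:ℝ)/H) * a k with hb_def
  set Q : ℝ≥0∞ := ENNReal.ofReal T + (2:ℝ≥0∞) ^ (1/H : ℝ) * P with hQ_def
  have hQfin : Q ≠ ⊤ := by
    rw [hQ_def]
    exact ENNReal.add_ne_top.2 ⟨ENNReal.ofReal_ne_top,
      ENNReal.mul_ne_top (ENNReal.rpow_ne_top_of_nonneg (by positivity) (by norm_num)) hPfin⟩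
  -- ∑ b ≤ Q
  have hbQ : (∑' k, b k) ≤ Q := by
    have hbk : ∀ k : ℕ, b k ≤ (if k = 0 then ENNReal.ofReal T else 0)
        + (2:ℝ≥0∞) ^ (1/H : ℝ) * ∫⁻ u in D k, ENNReal.ofReal (|f u| ^ (1/H)) := by
      intro k
      match k with
      | 0 =>
        have hb0 : b 0 = a 0 := by
          simp only [hb_def, Nat.cast_zero, zero_div, ENNReal.rpow_zero, one_mul]
        rw [hb0, if_pos rfl]
        exact le_trans (haT 0) (self_le_add_right _ _)
      | (m+1) =>
        have hstep : ∀ u ∈ D (m+1),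
            ENNReal.ofReal (((2:ℝ)^m) ^ (1/H)) ≤ ENNReal.ofReal (|f u| ^ (1/H)) := by
          intro u hu
          have h1 : (2:ℝ)^(m+1) ≤ 1 + |f u| := (hDmem _ u hu).1
          have h2m : (1:ℝ) ≤ 2^m := one_le_pow₀ (by norm_num : (1:ℝ) ≤ 2)
          have h3 : (2:ℝ)^m ≤ |f u| := by
            have he : (2:ℝ)^(m+1) = 2^m + 2^m := by ring
            linarith
          exact ENNReal.ofReal_le_ofReal
            (Real.rpow_le_rpow (by positivity) h3 (by positivity))
        have hge : ENNReal.ofReal (((2:ℝ)^m) ^ (1/H)) * a (m+1)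
            ≤ ∫⁻ u in D (m+1), ENNReal.ofReal (|f u| ^ (1/H)) := by
          rw [ha_def, ← setLIntegral_const]
          exact setLIntegral_mono ((hf.abs.pow_const _).ennreal_ofReal) hstep
        have e1 : ENNReal.ofReal (((2:ℝ)^m) ^ (1/H)) = (2:ℝ≥0∞) ^ ((m:ℝ)*(1/H)) := by
          rw [← Real.rpow_natCast 2 m, ← Real.rpow_mul (by norm_num : (0:ℝ) ≤ 2),
            ← ENNReal.ofReal_rpow_of_pos (by norm_num : (0:ℝ) < 2), ENNReal.ofReal_ofNat]
        have e2 : b (m+1) = (2:ℝ≥0∞) ^ (1/H:ℝ)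
            * (ENNReal.ofReal (((2:ℝ)^m) ^ (1/H)) * a (m+1)) := by
          simp only [hb_def, e1]
          rw [← mul_assoc, ← ENNReal.rpow_add _ _ (by norm_num) (by norm_num)]
          congr 2
          push_cast
          field_simp
          ring
        rw [e2]
        simp only [Nat.succ_ne_zero, if_false, zero_add]
        exact mul_le_mul_right hge _
    calc (∑' k, b k) ≤ ∑' k : ℕ, ((if k = 0 then ENNReal.ofReal T else 0)
          + (2:ℝ≥0∞) ^ (1/H : ℝ) * ∫⁻ u in D k, ENNReal.ofReal (|f u| ^ (1/H))) :=
        ENNReal.tsum_le_tsum hbk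
      _ = (∑' k : ℕ, if k = 0 then ENNReal.ofReal T else 0)
          + (2:ℝ≥0∞) ^ (1/H : ℝ) * ∑' k, ∫⁻ u in D k, ENNReal.ofReal (|f u| ^ (1/H)) := by
        rw [ENNReal.tsum_add, ENNReal.tsum_mul_left]
      _ ≤ ENNReal.ofReal T + (2:ℝ≥0∞) ^ (1/H : ℝ) * P := by
        refine add_le_add (le_of_eq (tsum_ite_eq 0 _)) (mul_le_mul_right ?_ _)
        rw [hP_def, ← lintegral_iUnion hD hDdisj]
        exact lintegral_mono_set (iUnion_subset hDsub)
      _ = Q := hQ_def.symm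
  -- kernel estimates
  set C1 : ℝ≥0∞ := ENNReal.ofReal (2/(2*H-1) + 1) with hC1_def
  have hC1fin : C1 ≠ ⊤ := ENNReal.ofReal_ne_top
  have hJ : ∀ (u : ℝ) (k : ℕ), (∫⁻ v in D k, K u v) ≤ C1 * a k ^ (2*H-1) := by
    intro u k
    have hkb := kernel_bound hβ1 hβ0 u (hD k) (hafin k)
    rw [hβθ] at hkb
    exact hkb
  set I : ℕ → ℕ → ℝ≥0∞ := fun j k => ∫⁻ u in D j, ∫⁻ v in D k, K u v with hI_def
  have hI2 : ∀ j k, I j k ≤ C1 * (a j ^ (2*H-1) * a k) := by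
    intro j k
    have hswap : I j k = ∫⁻ v in D k, ∫⁻ u in D j, K u v := by
      simp only [hI_def]
      exact lintegral_lintegral_swap hKm.aemeasurable
    have hsym : ∀ v, (∫⁻ u in D j, K u v) = ∫⁻ u in D j, K v u := by
      intro v
      refine lintegral_congr fun u => ?_
      simp only [hK_def, abs_sub_comm]
    calc I j k = ∫⁻ v in D k, ∫⁻ u in D j, K v u := by rw [hswap]; exact lintegral_congr hsym
      _ ≤ ∫⁻ _ in D k, C1 * a j ^ (2*H-1) := lintegral_mono fun v => hJ v j
      _ = C1 * a j ^ (2*H-1) * a k := setLIntegral_const _ _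
      _ = C1 * (a j ^ (2*H-1) * a k) := mul_assoc _ _ _
  -- pointwise comparison
  have stepA : (∫⁻ u in Set.Ioc (0 : ℝ) T, ∫⁻ v in Set.Ioc (0 : ℝ) T,
      ENNReal.ofReal (|f u| * |f v| * |u - v| ^ (2*H - 2)))
      ≤ ∫⁻ u in Ioc (0:ℝ) T, ∫⁻ v in Ioc (0:ℝ) T, Φ u * (Φ v * K u v) := by
    refine lintegral_mono_ae ((ae_restrict_iff' measurableSet_Ioc).2
      (ae_of_all _ fun u hu => ?_))
    refine lintegral_mono_ae ((ae_restrict_iff' measurableSet_Ioc).2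
      (ae_of_all _ fun v hv => ?_))
    have h1 : ENNReal.ofReal (|f u| * |f v| * |u - v| ^ (2*H - 2))
        = ENNReal.ofReal |f u| * ENNReal.ofReal |f v| * K u v := by
      simp only [hK_def]
      rw [← ENNReal.ofReal_mul (abs_nonneg (f u)),
        ← ENNReal.ofReal_mul (mul_nonneg (abs_nonneg _) (abs_nonneg _))]
    rw [h1, mul_assoc]
    exact mul_le_mul' (hG u hu) (mul_le_mul' (hG v hv) le_rfl)
  have hJm : ∀ k : ℕ, Measurable fun u => ∫⁻ v in D k, K u v :=
    fun k => Measurable.lintegral_prod_right hKm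
  have hinner : ∀ u, (∫⁻ v in Ioc (0:ℝ) T, Φ v * K u v)
      = ∑' k : ℕ, (2:ℝ≥0∞)^(k+1) * (∫⁻ v in D k, K u v) := by
    intro u
    have h1 : ∀ v, Φ v * K u v = ∑' k, φ k v * K u v := by
      intro v
      simp only [hΦ_def]
      exact (ENNReal.tsum_mul_right).symm
    rw [lintegral_congr h1, lintegral_tsum fun k => (show AEMeasurable (fun v => φ k v * K u v) _ from
      ((hφm k).mul (hKv u)).aemeasurable)]
    refine tsum_congr fun k => ?_
    have h2 : ∀ v, φ k v * K u v = (D k).indicator (fun v => (2:ℝ≥0∞)^(k+1) * K u v) v := by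
      intro v
      simp only [hφ_def]
      by_cases hv : v ∈ D k
      · simp [Set.indicator_of_mem hv]
      · simp [Set.indicator_of_notMem hv]
    rw [lintegral_congr h2, lintegral_indicator (hD k), Measure.restrict_restrict (hD k),
      inter_eq_self_of_subset_left (hDsub k), lintegral_const_mul _ (hKv u)]
  have hSm : Measurable fun u => ∑' k : ℕ, (2:ℝ≥0∞)^(k+1) * (∫⁻ v in D k, K u v) :=
    Measurable.ennreal_tsum fun k => measurable_const.mul (hJm k)
  have houter : (∫⁻ u in Ioc (0:ℝ) T, ∫⁻ v in Ioc (0:ℝ) T, Φ u * (Φ v * K u v))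
      = ∑' j : ℕ, ∑' k : ℕ, (2:ℝ≥0∞)^(j+1) * ((2:ℝ≥0∞)^(k+1) * I j k) := by
    have h0 : ∀ u, (∫⁻ v in Ioc (0:ℝ) T, Φ u * (Φ v * K u v))
        = Φ u * ∑' k : ℕ, (2:ℝ≥0∞)^(k+1) * (∫⁻ v in D k, K u v) := by
      intro u
      rw [lintegral_const_mul _ (show Measurable (fun v => Φ v * K u v) from hΦm.mul (hKv u)), hinner u]
    rw [lintegral_congr h0]
    have h1 : ∀ u, (Φ u * ∑' k : ℕ, (2:ℝ≥0∞)^(k+1) * (∫⁻ v in D k, K u v))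
        = ∑' j : ℕ, φ j u * ∑' k : ℕ, (2:ℝ≥0∞)^(k+1) * (∫⁻ v in D k, K u v) := by
      intro u
      simp only [hΦ_def]
      exact (ENNReal.tsum_mul_right).symm
    rw [lintegral_congr h1, lintegral_tsum fun j => (show AEMeasurable (fun u => φ j u
      * ∑' k : ℕ, (2:ℝ≥0∞)^(k+1) * (∫⁻ v in D k, K u v)) _ from ((hφm j).mul hSm).aemeasurable)]
    refine tsum_congr fun j => ?_
    have h2 : ∀ u, (φ j u * ∑' k : ℕ, (2:ℝ≥0∞)^(k+1) * (∫⁻ v in D k, K u v))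
        = (D j).indicator
            (fun u => (2:ℝ≥0∞)^(j+1) * ∑' k : ℕ, (2:ℝ≥0∞)^(k+1) * (∫⁻ v in D k, K u v)) u := by
      intro u
      simp only [hφ_def]
      by_cases hu : u ∈ D j
      · simp [Set.indicator_of_mem hu]
      · simp [Set.indicator_of_notMem hu]
    rw [lintegral_congr h2, lintegral_indicator (hD j), Measure.restrict_restrict (hD j),
      inter_eq_self_of_subset_left (hDsub j), lintegral_const_mul _ hSm,
      lintegral_tsum fun k => (show AEMeasurable (fun u => (2:ℝ≥0∞)^(k+1) * (∫⁻ v in D k, K u v)) _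
        from (measurable_const.mul (hJm k)).aemeasurable),
      ← ENNReal.tsum_mul_left]
    refine tsum_congr fun k => ?_
    rw [lintegral_const_mul _ (hJm k)]
  -- the decay factor
  have hδpos : (0:ℝ) < 1/H - 1 := by
    have h1 : (1:ℝ) < 1/H := by
      rw [lt_div_iff₀ hH0]; linarith
    linarith
  have hr1 : (2:ℝ≥0∞) ^ (-(1/H-1) : ℝ) < 1 := by
    calc (2:ℝ≥0∞) ^ (-(1/H-1) : ℝ) < 2 ^ (0:ℝ) :=
        ENNReal.rpow_lt_rpow_of_exponent_lt (by norm_num) (by norm_num) (by linarith)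
      _ = 1 := ENNReal.rpow_zero
  -- per-term estimate
  have hterm : ∀ j k : ℕ, (2:ℝ≥0∞)^(j+1) * ((2:ℝ≥0∞)^(k+1) * I j k)
      ≤ 4 * C1 * (((2:ℝ≥0∞) ^ (-(1/H-1) : ℝ)) ^ ((j-k)+(k-j))
        * ((b j + b j ^ (1/(2-2*H))) + (b k + b k ^ (1/(2-2*H))))) := by
    intro j k
    rcases le_total j k with hjk | hkj
    · have hTB := term_bound hH1 hH2 hjk (a j) (a k)
      calc (2:ℝ≥0∞)^(j+1) * ((2:ℝ≥0∞)^(k+1) * I j k)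
          ≤ (2:ℝ≥0∞)^(j+1) * ((2:ℝ≥0∞)^(k+1) * (C1 * (a j ^ (2*H-1) * a k))) :=
            mul_le_mul_right (mul_le_mul_right (hI2 j k) _) _
        _ = 4 * C1 * ((2:ℝ≥0∞)^j * 2^k * (a j ^ (2*H-1) * a k)) := by ring
        _ = 4 * C1 * ((2:ℝ≥0∞)^(j:ℝ) * 2^(k:ℝ) * (a j ^ (2*H-1) * a k)) := by
            rw [ENNReal.rpow_natCast, ENNReal.rpow_natCast]
        _ ≤ 4 * C1 * (((2:ℝ≥0∞) ^ (-(1/H-1) : ℝ)) ^ ((j-k)+(k-j))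
            * ((b j + b j ^ (1/(2-2*H))) + (b k + b k ^ (1/(2-2*H))))) := by
            simp only [hb_def]
            exact mul_le_mul_right hTB _
    · have hI1 : I j k ≤ C1 * (a k ^ (2*H-1) * a j) := by
        calc I j k ≤ ∫⁻ _ in D j, C1 * a k ^ (2*H-1) := lintegral_mono fun u => hJ u k
          _ = C1 * a k ^ (2*H-1) * a j := setLIntegral_const _ _
          _ = C1 * (a k ^ (2*H-1) * a j) := mul_assoc _ _ _
      have hTB := term_bound hH1 hH2 hkj (a k) (a j)
      calc (2:ℝ≥0∞)^(j+1) * ((2:ℝ≥0∞)^(k+1) * I j k)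
          ≤ (2:ℝ≥0∞)^(j+1) * ((2:ℝ≥0∞)^(k+1) * (C1 * (a k ^ (2*H-1) * a j))) :=
            mul_le_mul_right (mul_le_mul_right hI1 _) _
        _ = 4 * C1 * ((2:ℝ≥0∞)^k * 2^j * (a k ^ (2*H-1) * a j)) := by ring
        _ = 4 * C1 * ((2:ℝ≥0∞)^(k:ℝ) * 2^(j:ℝ) * (a k ^ (2*H-1) * a j)) := by
            rw [ENNReal.rpow_natCast, ENNReal.rpow_natCast]
        _ ≤ 4 * C1 * (((2:ℝ≥0∞) ^ (-(1/H-1) : ℝ)) ^ ((k-j)+(j-k))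
            * ((b k + b k ^ (1/(2-2*H))) + (b j + b j ^ (1/(2-2*H))))) := by
            simp only [hb_def]
            exact mul_le_mul_right hTB _
        _ = 4 * C1 * (((2:ℝ≥0∞) ^ (-(1/H-1) : ℝ)) ^ ((j-k)+(k-j))
            * ((b j + b j ^ (1/(2-2*H))) + (b k + b k ^ (1/(2-2*H))))) := by
            rw [add_comm (k-j) (j-k)]
            ring
  -- summing up
  have hfinal : (∑' j : ℕ, ∑' k : ℕ, (2:ℝ≥0∞)^(j+1) * ((2:ℝ≥0∞)^(k+1) * I j k))
      ≤ 4 * C1 * (2 * ((2 * (1 - (2:ℝ≥0∞) ^ (-(1/H-1) : ℝ))⁻¹)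
          * ∑' i : ℕ, (b i + b i ^ (1/(2-2*H))))) := by
    calc (∑' j : ℕ, ∑' k : ℕ, (2:ℝ≥0∞)^(j+1) * ((2:ℝ≥0∞)^(k+1) * I j k))
        ≤ ∑' j : ℕ, ∑' k : ℕ, 4 * C1 * (((2:ℝ≥0∞) ^ (-(1/H-1) : ℝ)) ^ ((j-k)+(k-j))
            * ((b j + b j ^ (1/(2-2*H))) + (b k + b k ^ (1/(2-2*H))))) :=
          ENNReal.tsum_le_tsum fun j => ENNReal.tsum_le_tsum fun k => hterm j k
      _ = 4 * C1 * ∑' j : ℕ, ∑' k : ℕ, (((2:ℝ≥0∞) ^ (-(1/H-1) : ℝ)) ^ ((j-k)+(k-j))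
            * ((b j + b j ^ (1/(2-2*H))) + (b k + b k ^ (1/(2-2*H))))) := by
          simp only [ENNReal.tsum_mul_left]
      _ ≤ _ := mul_le_mul_right (sum_bound hr1.le (fun i => b i + b i ^ (1/(2-2*H)))) _
  -- finiteness of the right-hand side
  have hq1 : (1:ℝ) ≤ 1/(2-2*H) := by
    rw [le_div_iff₀ (by linarith : (0:ℝ) < 2-2*H)]
    linarith
  have hcsum_fin : (∑' i : ℕ, (b i + b i ^ (1/(2-2*H)))) ≠ ⊤ := by
    have hbq : ∀ i : ℕ, b i ^ (1/(2-2*H)) ≤ Q ^ (1/(2-2*H) - 1) * b i := by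
      intro i
      have hbiQ : b i ≤ Q := le_trans (ENNReal.le_tsum i) hbQ
      rcases eq_or_ne (b i) 0 with h0 | h0
      · rw [h0, ENNReal.zero_rpow_of_pos (by linarith)]
        exact zero_le ..
      · have hbit : b i ≠ ⊤ := (lt_of_le_of_lt hbiQ (lt_top_iff_ne_top.2 hQfin)).ne
        calc b i ^ (1/(2-2*H)) = b i ^ ((1/(2-2*H) - 1) + 1) := by norm_num
          _ = b i ^ (1/(2-2*H) - 1) * b i ^ (1:ℝ) := ENNReal.rpow_add _ _ h0 hbit
          _ = b i ^ (1/(2-2*H) - 1) * b i := by rw [ENNReal.rpow_one]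
          _ ≤ Q ^ (1/(2-2*H) - 1) * b i :=
              mul_le_mul_left (ENNReal.rpow_le_rpow hbiQ (by linarith)) _
    have hle : (∑' i : ℕ, (b i + b i ^ (1/(2-2*H))))
        ≤ Q + Q ^ (1/(2-2*H) - 1) * Q := by
      rw [ENNReal.tsum_add]
      refine add_le_add hbQ ?_
      calc (∑' i : ℕ, b i ^ (1/(2-2*H))) ≤ ∑' i : ℕ, Q ^ (1/(2-2*H) - 1) * b i :=
          ENNReal.tsum_le_tsum hbq
        _ = Q ^ (1/(2-2*H) - 1) * ∑' i, b i := ENNReal.tsum_mul_left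
        _ ≤ Q ^ (1/(2-2*H) - 1) * Q := mul_le_mul_right hbQ _
    exact ne_top_of_le_ne_top (ENNReal.add_ne_top.2 ⟨hQfin,
      ENNReal.mul_ne_top (ENNReal.rpow_ne_top_of_nonneg (by linarith) hQfin) hQfin⟩) hle
  have hWfin : (1 - (2:ℝ≥0∞) ^ (-(1/H-1) : ℝ))⁻¹ ≠ ⊤ := by
    rw [Ne, ENNReal.inv_eq_top, tsub_eq_zero_iff_le]
    exact not_le.2 hr1
  calc (∫⁻ u in Set.Ioc (0 : ℝ) T, ∫⁻ v in Set.Ioc (0 : ℝ) T,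
      ENNReal.ofReal (|f u| * |f v| * |u - v| ^ (2*H - 2)))
      ≤ ∑' j : ℕ, ∑' k : ℕ, (2:ℝ≥0∞)^(j+1) * ((2:ℝ≥0∞)^(k+1) * I j k) := by
        rw [← houter]; exact stepA
    _ ≤ 4 * C1 * (2 * ((2 * (1 - (2:ℝ≥0∞) ^ (-(1/H-1) : ℝ))⁻¹)
          * ∑' i : ℕ, (b i + b i ^ (1/(2-2*H))))) := hfinal
    _ < ⊤ :=
        (ENNReal.mul_ne_top (ENNReal.mul_ne_top (by norm_num) hC1fin)
          (ENNReal.mul_ne_top (by norm_num) (ENNReal.mul_ne_top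
            (ENNReal.mul_ne_top (by norm_num) hWfin) hcsum_fin))).lt_top
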